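/- Let f : D → ℝ be differentiable on a convex set D ⊆ ℝⁿ. Then f is strongly convex with parameter μ > 0 if and only if ⟨∇f(x) − ∇f(y), x − y⟩ ≥ μ‖x − y‖² for all x, y ∈ D. -/

import Mathlib

open RealInnerProductSpace

private lemma line_hasDerivAt {n : ℕ} (f : EuclideanSpace ℝ (Fin n) → ℝ)
    (g x y : EuclideanSpace ℝ (Fin n)) (s : ℝ) (h : HasGradientAt f g (y + s • (x - y))) :
    HasDerivAt (fun t : ℝ => f (y + t • (x - y))) ⟪g, x - y⟫ s := by
  have hc : HasDerivAt (fun t : ℝ => y + t • (x - y)) (x - y) s := by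
    simpa using ((hasDerivAt_id s).smul_const (x - y)).const_add y
  have := h.hasFDerivAt.comp_hasDerivAt s hc
  simpa [InnerProductSpace.toDual_apply_apply, Function.comp_def] using this

private lemma first_order {n : ℕ} (D : Set (EuclideanSpace ℝ (Fin n)))
    (f : EuclideanSpace ℝ (Fin n) → ℝ) (f' : EuclideanSpace ℝ (Fin n) → EuclideanSpace ℝ (Fin n))
    (hf : ∀ x ∈ D, HasGradientAt f (f' x) x) (μ : ℝ)
    (hcv : ∀ x ∈ D, ∀ y ∈ D, ∀ t ∈ Set.Icc (0:ℝ) 1,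
        f (t • x + (1 - t) • y)
          ≤ t * f x + (1 - t) * f y - μ / 2 * t * (1 - t) * ‖x - y‖ ^ 2)
    {x y : EuclideanSpace ℝ (Fin n)} (hx : x ∈ D) (hy : y ∈ D) :
    ⟪f' y, x - y⟫ ≤ f x - f y - μ / 2 * ‖x - y‖ ^ 2 := by
  set g : ℝ → ℝ := fun t => f (y + t • (x - y)) with hg
  have hgrad : HasGradientAt f (f' y) (y + (0:ℝ) • (x - y)) := by simpa using hf y hy
  have hd : HasDerivAt g ⟪f' y, x - y⟫ 0 := line_hasDerivAt f (f' y) x y 0 hgrad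
  have hslope : Filter.Tendsto (slope g 0) (nhdsWithin 0 (Set.Ioi 0)) (nhds ⟪f' y, x - y⟫) :=
    (hasDerivAt_iff_tendsto_slope.1 hd).mono_left
      (nhdsWithin_mono 0 (fun t ht => Set.mem_compl_singleton_iff.2 (ne_of_gt ht)))
  have hlim : Filter.Tendsto (fun t : ℝ => f x - f y - μ / 2 * (1 - t) * ‖x - y‖ ^ 2)
      (nhdsWithin 0 (Set.Ioi 0)) (nhds (f x - f y - μ / 2 * ‖x - y‖ ^ 2)) := by
    have hcont : Continuous (fun t : ℝ => f x - f y - μ / 2 * (1 - t) * ‖x - y‖ ^ 2) := by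
      fun_prop
    have := (hcont.tendsto 0).mono_left (nhdsWithin_le_nhds (s := Set.Ioi 0))
    simpa using this
  refine le_of_tendsto_of_tendsto hslope hlim ?_
  filter_upwards [Ioc_mem_nhdsGT_of_mem (Set.mem_Ico.2 ⟨le_refl 0, zero_lt_one⟩)] with t ht
  obtain ⟨ht0, ht1⟩ := ht
  have key := hcv x hx y hy t ⟨le_of_lt ht0, ht1⟩
  have hpt : t • x + (1 - t) • y = y + t • (x - y) := by module
  rw [hpt] at key
  have : slope g 0 t = (g t - g 0) / t := by simp [slope_def_field]
  rw [this]
  rw [div_le_iff₀ ht0]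
  have hg0 : g 0 = f y := by simp [hg]
  rw [hg0]
  nlinarith [key]

theorem stmt_8 {n : ℕ} (D : Set (EuclideanSpace ℝ (Fin n))) (hD : Convex ℝ D)
    (f : EuclideanSpace ℝ (Fin n) → ℝ) (f' : EuclideanSpace ℝ (Fin n) → EuclideanSpace ℝ (Fin n))
    (hf : ∀ x ∈ D, HasGradientAt f (f' x) x) (μ : ℝ) (hμ : 0 < μ) :
    (∀ x ∈ D, ∀ y ∈ D, ∀ t ∈ Set.Icc (0:ℝ) 1,
        f (t • x + (1 - t) • y)
          ≤ t * f x + (1 - t) * f y - μ / 2 * t * (1 - t) * ‖x - y‖ ^ 2)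
      ↔ (∀ x ∈ D, ∀ y ∈ D, ⟪f' x - f' y, x - y⟫ ≥ μ * ‖x - y‖ ^ 2) := by
  constructor
  · intro hcv x hx y hy
    have h1 := first_order D f f' hf μ hcv hx hy
    have h2 := first_order D f f' hf μ hcv hy hx
    have hsym : ‖y - x‖ = ‖x - y‖ := norm_sub_rev y x
    rw [hsym] at h2
    have h3 : ⟪f' x, y - x⟫ = - ⟪f' x, x - y⟫ := by
      rw [← inner_neg_right]; congr 1; abel
    rw [h3] at h2
    rw [inner_sub_left]
    linarith
  · intro hmono x hx y hy t ht
    obtain ⟨ht0, ht1⟩ := ht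
    set N := ‖x - y‖ ^ 2 with hN
    set c : ℝ → EuclideanSpace ℝ (Fin n) := fun s => y + s • (x - y) with hc
    have hcD : ∀ s ∈ Set.Icc (0:ℝ) 1, c s ∈ D := by
      intro s hs
      have : c s = s • x + (1 - s) • y := by simp only [hc]; module
      rw [this]
      exact hD hx hy hs.1 (by linarith [hs.2]) (by ring)
    set g : ℝ → ℝ := fun s => f (c s) - μ / 2 * s ^ 2 * N with hg
    have hg' : ∀ s ∈ Set.Icc (0:ℝ) 1,
        HasDerivAt g (⟪f' (c s), x - y⟫ - μ * s * N) s := by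
      intro s hs
      have h1 : HasDerivAt (fun t : ℝ => f (y + t • (x - y))) ⟪f' (c s), x - y⟫ s :=
        line_hasDerivAt f (f' (c s)) x y s (hf _ (hcD s hs))
      have h2 : HasDerivAt (fun s : ℝ => μ / 2 * s ^ 2 * N) (μ * s * N) s := by
        have : HasDerivAt (fun s : ℝ => μ / 2 * s ^ 2 * N) (μ / 2 * (((2:ℕ):ℝ) * s ^ (2 - 1)) * N) s :=
          ((hasDerivAt_pow 2 s).const_mul (μ / 2)).mul_const N
        convert this using 1
        ring
      exact h1.sub h2
    have hcvx : ConvexOn ℝ (Set.Icc (0:ℝ) 1) g := by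
      apply MonotoneOn.convexOn_of_deriv (convex_Icc 0 1)
      · intro s hs
        exact ((hg' s hs).continuousAt).continuousWithinAt
      · rw [interior_Icc]
        intro s hs
        exact ((hg' s (Set.mem_Icc_of_Ioo hs)).differentiableAt).differentiableWithinAt
      · rw [interior_Icc]
        intro s hs r hr hsr
        rw [(hg' s (Set.mem_Icc_of_Ioo hs)).deriv, (hg' r (Set.mem_Icc_of_Ioo hr)).deriv]
        rcases eq_or_lt_of_le hsr with heq | hlt
        · rw [heq]
        · have key := hmono (c r) (hcD r (Set.mem_Icc_of_Ioo hr)) (c s) (hcD s (Set.mem_Icc_of_Ioo hs))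
          have hdiff : c r - c s = (r - s) • (x - y) := by simp only [hc]; module
          rw [hdiff, real_inner_smul_right, norm_smul] at key
          have hn : ‖r - s‖ = r - s := by
            rw [Real.norm_eq_abs, abs_of_pos (by linarith)]
          rw [hn, mul_pow] at key
          rw [inner_sub_left] at key
          rw [← hN] at key
          have hrs : 0 < r - s := by linarith
          nlinarith [key, hrs, mul_pos hrs hrs]
    have hmem0 : (0:ℝ) ∈ Set.Icc (0:ℝ) 1 := ⟨le_refl 0, zero_le_one⟩
    have hmem1 : (1:ℝ) ∈ Set.Icc (0:ℝ) 1 := ⟨zero_le_one, le_refl 1⟩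
    have key2 : g (t • (1:ℝ) + (1 - t) • (0:ℝ)) ≤ t • g 1 + (1 - t) • g 0 :=
      hcvx.2 hmem1 hmem0 ht0 (by linarith) (by ring)
    have hpt : t • (1:ℝ) + (1 - t) • (0:ℝ) = t := by simp
    rw [hpt, smul_eq_mul, smul_eq_mul] at key2
    have hgt : g t = f (c t) - μ / 2 * t ^ 2 * N := rfl
    have hg1 : g 1 = f x - μ / 2 * N := by
      have : c 1 = x := by simp only [hc]; module
      simp [hg, this]
    have hg0 : g 0 = f y := by
      have : c 0 = y := by simp only [hc]; module
      simp [hg, this]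
    rw [hgt, hg1, hg0] at key2
    have hct : t • x + (1 - t) • y = c t := by simp only [hc]; module
    rw [hct]
    nlinarith [key2]
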